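/- Let m ≥ 1. The map h defined by h(u) = η(α u⁻¹ β⁻¹) restricts to a bijection from the segment [id, w_{2m}] onto C_{2m+2}; in particular the cardinality of the segment [id, w_{2m}] in S_{2m} equals the cardinality of C_{2m+2}. -/

import Mathlib

/-- Membership in `S_n`, realized as permutations of `ℕ` fixing every point
outside `{1, …, n}`. -/
def InSymm (n : ℕ) (π : Equiv.Perm ℕ) : Prop :=
  ∀ i : ℕ, i ∉ Finset.Icc 1 n → π i = i

/-- The ℓ¹-distance `D(u,v) = ∑_{i=1}^n |u(i) − v(i)|` on `S_n`. -/
def permDist (n : ℕ) (u v : Equiv.Perm ℕ) : ℤ :=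
  ∑ i ∈ Finset.Icc 1 n, |(u i : ℤ) - (v i : ℤ)|

theorem Equiv.Perm.inv_apply_self {α : Type*} (f : Equiv.Perm α) (x : α) : f⁻¹ (f x) = x :=
  f.symm_apply_apply x

theorem Equiv.Perm.apply_inv_self {α : Type*} (f : Equiv.Perm α) (x : α) : f (f⁻¹ x) = x :=
  f.apply_symm_apply x

lemma InSymm.inv {n : ℕ} {π : Equiv.Perm ℕ} (h : InSymm n π) : InSymm n π⁻¹ := by
  intro i hi
  calc π⁻¹ i = π⁻¹ (π i) := by rw [h i hi]
  _ = i := Equiv.Perm.inv_apply_self π i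

lemma InSymm.mul {n : ℕ} {π ρ : Equiv.Perm ℕ} (hπ : InSymm n π) (hρ : InSymm n ρ) :
    InSymm n (π * ρ) := by
  intro i hi
  simp only [Equiv.Perm.mul_apply, hρ i hi, hπ i hi]

lemma InSymm.bounds {n : ℕ} {π : Equiv.Perm ℕ} (h : InSymm n π) {i : ℕ}
    (h1 : 1 ≤ i) (h2 : i ≤ n) : 1 ≤ π i ∧ π i ≤ n := by
  by_contra hc
  have hmem : π i ∉ Finset.Icc 1 n := by simp only [Finset.mem_Icc]; omega
  have h3 := h.inv (π i) hmem
  rw [Equiv.Perm.inv_apply_self] at h3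
  simp only [Finset.mem_Icc, ← h3] at hmem
  omega

lemma abs_between (a b c : ℤ) : |a - b| + |b - c| = |a - c| ↔
    ((a ≤ b ∧ b ≤ c) ∨ (c ≤ b ∧ b ≤ a)) := by
  rcases abs_cases (a - b) with ⟨h1, h2⟩ | ⟨h1, h2⟩ <;>
  rcases abs_cases (b - c) with ⟨h3, h4⟩ | ⟨h3, h4⟩ <;>
  rcases abs_cases (a - c) with ⟨h5, h6⟩ | ⟨h5, h6⟩ <;>
  rw [h1, h3, h5] <;> omega

/-- Betweenness condition characterizing the segment `[id, w_{2m}]`. -/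
def SegBtw (m : ℕ) (u : Equiv.Perm ℕ) : Prop :=
  ∀ i, 1 ≤ i → i ≤ 2 * m →
    (i ≤ m → i ≤ u i ∧ u i ≤ i + m) ∧ (m + 1 ≤ i → i - m ≤ u i ∧ u i ≤ i)

lemma segment_iff (m : ℕ) (hm : 1 ≤ m) (w v : Equiv.Perm ℕ)
    (hw1 : ∀ j, 1 ≤ j → j ≤ m → w j = j + m)
    (hw2 : ∀ j, m + 1 ≤ j → j ≤ 2 * m → w j = j - m) :
    (permDist (2 * m) 1 v + permDist (2 * m) v w = permDist (2 * m) 1 w) ↔ SegBtw m v := by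
  unfold permDist
  rw [← Finset.sum_add_distrib]
  rw [eq_comm, Finset.sum_eq_sum_iff_of_le (fun i _ => abs_sub_le _ ((v i : ℤ)) _)]
  constructor
  · intro h i h1 h2
    have hi : i ∈ Finset.Icc 1 (2 * m) := Finset.mem_Icc.mpr ⟨h1, h2⟩
    have := h i hi
    simp only [Equiv.Perm.one_apply] at this
    rw [eq_comm, abs_between] at this
    constructor
    · intro hle
      rw [hw1 i h1 hle] at this
      push_cast at this
      omega
    · intro hge
      rw [hw2 i hge h2] at this
      have : ((i : ℤ) ≤ v i ∧ (v i : ℤ) ≤ (↑(i - m) : ℤ)) ∨ ((↑(i - m) : ℤ) ≤ v i ∧ (v i : ℤ) ≤ i) := this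
      omega
  · intro h i hi
    rw [Finset.mem_Icc] at hi
    obtain ⟨h1, h2⟩ := hi
    have hb := h i h1 h2
    simp only [Equiv.Perm.one_apply]
    rw [eq_comm, abs_between]
    by_cases hle : i ≤ m
    · rw [hw1 i h1 hle]
      have := hb.1 hle
      push_cast
      omega
    · rw [hw2 i (by omega) h2]
      have := hb.2 (by omega)
      omega

/-- Condition on `g = α u⁻¹ β⁻¹` corresponding to `C_{2m+2}`. -/
def GCond (m : ℕ) (g : Equiv.Perm ℕ) : Prop :=
  ∀ k, 2 ≤ k → k ≤ m → g (2 * k - 1) ≤ 2 * k - 2 ∧ 2 * k - 1 ≤ g (2 * k - 2)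

lemma gval (m : ℕ) (u β : Equiv.Perm ℕ) (α : Equiv.Perm ℕ)
    (hβ1 : ∀ j, 1 ≤ j → j ≤ m - 1 → β j = 2 * j + 1)
    (hβ4 : ∀ j, m + 2 ≤ j → j ≤ 2 * m → β j = 2 * j - 2 * m - 2)
    {k : ℕ} (hk2 : 2 ≤ k) (hkm : k ≤ m) :
    (α * u⁻¹ * β⁻¹) (2 * k - 1) = α (u⁻¹ (k - 1)) ∧
    (α * u⁻¹ * β⁻¹) (2 * k - 2) = α (u⁻¹ (k + m)) := by
  have hb1 : β (k - 1) = 2 * k - 1 := by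
    have := hβ1 (k - 1) (by omega) (by omega); omega
  have hb2 : β (k + m) = 2 * k - 2 := by
    have := hβ4 (k + m) (by omega) (by omega); omega
  have e1 : β⁻¹ (2 * k - 1) = k - 1 := by rw [← hb1, Equiv.Perm.inv_apply_self]
  have e2 : β⁻¹ (2 * k - 2) = k + m := by rw [← hb2, Equiv.Perm.inv_apply_self]
  simp [Equiv.Perm.mul_apply, e1, e2]

lemma segbtw_iff_gcond (m : ℕ) (hm : 1 ≤ m) (u α β : Equiv.Perm ℕ)
    (hu : InSymm (2 * m) u)
    (hα1 : ∀ j, 1 ≤ j → j ≤ m → α j = 2 * j - 1)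
    (hα2 : ∀ j, m + 1 ≤ j → j ≤ 2 * m → α j = 2 * j - 2 * m)
    (hβ1 : ∀ j, 1 ≤ j → j ≤ m - 1 → β j = 2 * j + 1)
    (hβ4 : ∀ j, m + 2 ≤ j → j ≤ 2 * m → β j = 2 * j - 2 * m - 2) :
    SegBtw m u ↔ GCond m (α * u⁻¹ * β⁻¹) := by
  constructor
  · intro hseg k hk2 hkm
    obtain ⟨e1, e2⟩ := gval m u β α hβ1 hβ4 hk2 hkm
    rw [e1, e2]
    set t := u⁻¹ (k - 1) with ht
    set t' := u⁻¹ (k + m) with ht'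
    have hut : u t = k - 1 := Equiv.Perm.apply_inv_self u (k - 1)
    have hut' : u t' = k + m := Equiv.Perm.apply_inv_self u (k + m)
    have htb : 1 ≤ t ∧ t ≤ 2 * m := hu.inv.bounds (by omega) (by omega)
    have htb' : 1 ≤ t' ∧ t' ≤ 2 * m := hu.inv.bounds (by omega) (by omega)
    have hs := hseg t htb.1 htb.2
    have hs' := hseg t' htb'.1 htb'.2
    constructor
    · by_cases hc : t ≤ m
      · have := (hs.1 hc).1
        rw [hα1 t htb.1 hc]
        omega
      · have := (hs.2 (by omega)).1
        rw [hα2 t (by omega) htb.2]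
        omega
    · by_cases hc : t' ≤ m
      · have := (hs'.1 hc).2
        rw [hα1 t' htb'.1 hc]
        omega
      · have := (hs'.2 (by omega)).2
        rw [hα2 t' (by omega) htb'.2]
        omega
  · intro hg i h1 h2
    set j := u i with hj
    have hjb : 1 ≤ j ∧ j ≤ 2 * m := hu.bounds h1 h2
    have hinv : u⁻¹ j = i := Equiv.Perm.inv_apply_self u i
    rcases lt_trichotomy j m with hc | hc | hc
    · -- j ≤ m - 1, use k = j + 1
      have hk := hg (j + 1) (by omega) (by omega)
      obtain ⟨e1, _⟩ := gval m u β α hβ1 hβ4 (show 2 ≤ j + 1 by omega) (by omega)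
      rw [e1] at hk
      have hk1 := hk.1
      have hsimp : j + 1 - 1 = j := by omega
      rw [hsimp, hinv] at hk1
      -- hk1 : α i ≤ 2 * (j+1) - 2
      by_cases hcc : i ≤ m
      · rw [hα1 i h1 hcc] at hk1; omega
      · rw [hα2 i (by omega) h2] at hk1; omega
    · constructor <;> intro <;> omega
    · rcases Nat.eq_or_lt_of_le hc with hc' | hc'
      · constructor <;> intro <;> omega
      · -- j ≥ m + 2, use k = j - m
        have hk := hg (j - m) (by omega) (by omega)
        obtain ⟨_, e2⟩ := gval m u β α hβ1 hβ4 (show 2 ≤ j - m by omega) (by omega)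
        rw [e2] at hk
        have hk2 := hk.2
        have hsimp : j - m + m = j := by omega
        rw [hsimp, hinv] at hk2
        by_cases hcc : i ≤ m
        · rw [hα1 i h1 hcc] at hk2; omega
        · rw [hα2 i (by omega) h2] at hk2; omega

/-- Bridge: the `C_{2m+2}` condition on a permutation `π'` built from `g` by
`η`-type value equations is equivalent to `GCond m g`. -/
lemma bridge (m : ℕ) (hm : 1 ≤ m) (g π' : Equiv.Perm ℕ)
    (hg : InSymm (2 * m) g)
    (hv1 : π' 1 = g 1 + 1)
    (hv2 : π' 2 = 1)
    (hv3 : ∀ i, 3 ≤ i → i ≤ 2 * m → π' i = g (i - 1) + 1)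
    (hv4 : π' (2 * m + 1) = 2 * m + 2)
    (hv5 : π' (2 * m + 2) = g (2 * m) + 1) :
    (∀ i, 1 ≤ i → i ≤ m + 1 → π' (2 * i) < 2 * i ∧ 2 * i ≤ π' (2 * i - 1)) ↔
    GCond m g := by
  constructor
  · intro hC k hk2 hkm
    have h := hC k (by omega) (by omega)
    have e1 : π' (2 * k) = g (2 * k - 1) + 1 := hv3 (2 * k) (by omega) (by omega)
    have e2 : π' (2 * k - 1) = g (2 * k - 1 - 1) + 1 := hv3 (2 * k - 1) (by omega) (by omega)
    have hss : 2 * k - 1 - 1 = 2 * k - 2 := by omega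
    rw [hss] at e2
    rw [e1, e2] at h
    omega
  · intro hG i h1 h2
    rcases Nat.eq_or_lt_of_le h1 with rfl | h1'
    · -- i = 1
      have hb : 1 ≤ g 1 ∧ g 1 ≤ 2 * m := hg.bounds (le_refl 1) (by omega)
      have : (2 : ℕ) * 1 = 2 := by norm_num
      rw [this]
      have h21 : 2 * 1 - 1 = 1 := by norm_num
      constructor
      · rw [hv2]; omega
      · rw [hv1]; omega
    · rcases Nat.eq_or_lt_of_le h2 with rfl | h2'
      · -- i = m + 1
        have hb : 1 ≤ g (2 * m) ∧ g (2 * m) ≤ 2 * m := hg.bounds (by omega) (by omega)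
        have e1 : 2 * (m + 1) = 2 * m + 2 := by ring
        have e2 : 2 * (m + 1) - 1 = 2 * m + 1 := by omega
        rw [e2, e1, hv5, hv4]
        omega
      · -- 2 ≤ i ≤ m
        have hk := hG i (by omega) (by omega)
        have e1 : π' (2 * i) = g (2 * i - 1) + 1 := hv3 (2 * i) (by omega) (by omega)
        have e2 : π' (2 * i - 1) = g (2 * i - 1 - 1) + 1 := hv3 (2 * i - 1) (by omega) (by omega)
        have hss : 2 * i - 1 - 1 = 2 * i - 2 := by omega
        rw [hss] at e2
        rw [e1, e2]
        omega

def etofun (m x : ℕ) : ℕ :=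
  if m = 0 then x else
  if 2 ≤ x ∧ x ≤ 2 * m - 1 then x + 1 else
  if x = 2 * m then 2 * m + 2 else
  if x = 2 * m + 1 then 2 else
  if x = 2 * m + 2 then 2 * m + 1 else x

def einvfun (m y : ℕ) : ℕ :=
  if m = 0 then y else
  if 3 ≤ y ∧ y ≤ 2 * m then y - 1 else
  if y = 2 * m + 2 then 2 * m else
  if y = 2 then 2 * m + 1 else
  if y = 2 * m + 1 then 2 * m + 2 else y

set_option maxHeartbeats 1000000 in
/-- The "position" permutation `e` used to invert `η`. -/
def eperm (m : ℕ) : Equiv.Perm ℕ where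
  toFun := etofun m
  invFun := einvfun m
  left_inv x := by unfold etofun einvfun; split_ifs <;> omega
  right_inv y := by unfold etofun einvfun; split_ifs <;> omega

/-- The "value shift" permutation `d` used to invert `η`. -/
def dtofun (m x : ℕ) : ℕ :=
  if 2 ≤ x ∧ x ≤ 2 * m + 1 then x - 1 else if x = 1 then 2 * m + 1 else x

def dinvfun (m y : ℕ) : ℕ :=
  if 1 ≤ y ∧ y ≤ 2 * m then y + 1 else if y = 2 * m + 1 then 1 else y

set_option maxHeartbeats 1000000 in
def dperm (m : ℕ) : Equiv.Perm ℕ where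
  toFun := dtofun m
  invFun := dinvfun m
  left_inv x := by unfold dtofun dinvfun; split_ifs <;> omega
  right_inv y := by unfold dtofun dinvfun; split_ifs <;> omega

lemma eperm_apply (m x : ℕ) (hm : 1 ≤ m) : eperm m x =
    (if 2 ≤ x ∧ x ≤ 2 * m - 1 then x + 1 else
     if x = 2 * m then 2 * m + 2 else
     if x = 2 * m + 1 then 2 else
     if x = 2 * m + 2 then 2 * m + 1 else x) := by
  show etofun m x = _
  unfold etofun
  rw [if_neg (by omega)]

lemma dperm_apply (m x : ℕ) : dperm m x =
    (if 2 ≤ x ∧ x ≤ 2 * m + 1 then x - 1 else if x = 1 then 2 * m + 1 else x) := rfl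

/-- `h : u ↦ η(α u⁻¹ β⁻¹)` restricts to a bijection from the
segment `[id, w_{2m}]` onto `C_{2m+2}`; in particular the two sets have the
same cardinality. -/
theorem h_bijOn_segment_C (m : ℕ) (hm : 1 ≤ m) (w α β : Equiv.Perm ℕ)
    -- `w` is `w_{2m}` with one-line notation `(m+1, …, 2m, 1, …, m)`
    (hw0 : InSymm (2 * m) w)
    (hw1 : ∀ j, 1 ≤ j → j ≤ m → w j = j + m)
    (hw2 : ∀ j, m + 1 ≤ j → j ≤ 2 * m → w j = j - m)
    -- `α` has one-line notation `(1, 3, …, 2m−1, 2, 4, …, 2m)`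
    (hα0 : InSymm (2 * m) α)
    (hα1 : ∀ j, 1 ≤ j → j ≤ m → α j = 2 * j - 1)
    (hα2 : ∀ j, m + 1 ≤ j → j ≤ 2 * m → α j = 2 * j - 2 * m)
    -- `β` has one-line notation `(3, 5, …, 2m−1, 1, 2m, 2, 4, …, 2m−2)`
    (hβ0 : InSymm (2 * m) β)
    (hβ1 : ∀ j, 1 ≤ j → j ≤ m - 1 → β j = 2 * j + 1)
    (hβ2 : β m = 1)
    (hβ3 : β (m + 1) = 2 * m)
    (hβ4 : ∀ j, m + 2 ≤ j → j ≤ 2 * m → β j = 2 * j - 2 * m - 2)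
    (H : Equiv.Perm ℕ → Equiv.Perm ℕ)
    -- `H u = η(α u⁻¹ β⁻¹)` for every `u ∈ S_{2m}`
    (hH : ∀ u : Equiv.Perm ℕ, InSymm (2 * m) u →
      InSymm (2 * m + 2) (H u) ∧
      H u 1 = (α * u⁻¹ * β⁻¹) 1 + 1 ∧
      H u 2 = 1 ∧
      (∀ i, 3 ≤ i → i ≤ 2 * m → H u i = (α * u⁻¹ * β⁻¹) (i - 1) + 1) ∧
      H u (2 * m + 1) = 2 * m + 2 ∧
      H u (2 * m + 2) = (α * u⁻¹ * β⁻¹) (2 * m) + 1) :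
    Set.BijOn H
      {v : Equiv.Perm ℕ | InSymm (2 * m) v ∧
        permDist (2 * m) 1 v + permDist (2 * m) v w = permDist (2 * m) 1 w}
      {π : Equiv.Perm ℕ | InSymm (2 * m + 2) π ∧
        ∀ i, 1 ≤ i → i ≤ m + 1 → π (2 * i) < 2 * i ∧ 2 * i ≤ π (2 * i - 1)} ∧
    Set.ncard
      {v : Equiv.Perm ℕ | InSymm (2 * m) v ∧
        permDist (2 * m) 1 v + permDist (2 * m) v w = permDist (2 * m) 1 w} =
    Set.ncard
      {π : Equiv.Perm ℕ | InSymm (2 * m + 2) π ∧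
        ∀ i, 1 ≤ i → i ≤ m + 1 → π (2 * i) < 2 * i ∧ 2 * i ≤ π (2 * i - 1)} := by
  have hbij : Set.BijOn H
      {v : Equiv.Perm ℕ | InSymm (2 * m) v ∧
        permDist (2 * m) 1 v + permDist (2 * m) v w = permDist (2 * m) 1 w}
      {π : Equiv.Perm ℕ | InSymm (2 * m + 2) π ∧
        ∀ i, 1 ≤ i → i ≤ m + 1 → π (2 * i) < 2 * i ∧ 2 * i ≤ π (2 * i - 1)} := by
    refine ⟨?_, ?_, ?_⟩
    · -- MapsTo
      rintro u ⟨hu, hdist⟩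
      obtain ⟨h0, h1, h2, h3, h4, h5⟩ := hH u hu
      have hgIn : InSymm (2 * m) (α * u⁻¹ * β⁻¹) := (hα0.mul hu.inv).mul hβ0.inv
      refine ⟨h0, ?_⟩
      rw [bridge m hm (α * u⁻¹ * β⁻¹) (H u) hgIn h1 h2 h3 h4 h5]
      exact (segbtw_iff_gcond m hm u α β hu hα1 hα2 hβ1 hβ4).mp
        ((segment_iff m hm w u hw1 hw2).mp hdist)
    · -- InjOn
      rintro u ⟨hu, _⟩ u' ⟨hu', _⟩ heq
      obtain ⟨h0, h1, h2, h3, h4, h5⟩ := hH u hu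
      obtain ⟨h0', h1', h2', h3', h4', h5'⟩ := hH u' hu'
      have hgIn : InSymm (2 * m) (α * u⁻¹ * β⁻¹) := (hα0.mul hu.inv).mul hβ0.inv
      have hgIn' : InSymm (2 * m) (α * u'⁻¹ * β⁻¹) := (hα0.mul hu'.inv).mul hβ0.inv
      rw [heq] at h1 h3 h5
      have hg : α * u⁻¹ * β⁻¹ = α * u'⁻¹ * β⁻¹ := by
        apply Equiv.ext
        intro x
        by_cases hx : x ∈ Finset.Icc 1 (2 * m)
        · rw [Finset.mem_Icc] at hx
          by_cases hx1 : x = 1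
          · subst hx1
            rw [h1'] at h1
            omega
          · by_cases hx2 : x = 2 * m
            · subst hx2
              rw [h5'] at h5
              omega
            · have hr := h3 (x + 1) (by omega) (by omega)
              rw [h3' (x + 1) (by omega) (by omega)] at hr
              have hsx : x + 1 - 1 = x := by omega
              rw [hsx] at hr
              omega
        · rw [hgIn x hx, hgIn' x hx]
      have hinv : u⁻¹ = u'⁻¹ := mul_left_cancel (mul_right_cancel hg)
      exact inv_injective hinv
    · -- SurjOn
      rintro π ⟨hπ0, hπC⟩
      have hπ12 : π 2 < 2 ∧ 2 ≤ π 1 := by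
        have h := hπC 1 (le_refl 1) (by omega)
        norm_num at h
        exact ⟨by omega, h.2⟩
      have hπ2 : π 2 = 1 := by
        have hb := hπ0.bounds (show 1 ≤ 2 by omega) (by omega)
        omega
      have hπm : π (2 * m + 2) < 2 * m + 2 ∧ π (2 * m + 1) = 2 * m + 2 := by
        have h := hπC (m + 1) (by omega) (le_refl _)
        have e2 : 2 * (m + 1) - 1 = 2 * m + 1 := by omega
        have e1 : 2 * (m + 1) = 2 * m + 2 := by ring
        rw [e2, e1] at h
        have hb := hπ0.bounds (show 1 ≤ 2 * m + 1 by omega) (by omega)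
        omega
      -- evaluation facts for eperm and dperm
      have he1 : eperm m 1 = 1 := by rw [eperm_apply m 1 hm]; split_ifs <;> omega
      have hemid : ∀ x, 2 ≤ x → x ≤ 2 * m - 1 → eperm m x = x + 1 := fun x a b => by
        rw [eperm_apply m x hm]; split_ifs <;> omega
      have he2m : eperm m (2 * m) = 2 * m + 2 := by
        rw [eperm_apply m (2 * m) hm]; split_ifs <;> omega
      have he2m1 : eperm m (2 * m + 1) = 2 := by
        rw [eperm_apply m (2 * m + 1) hm]; split_ifs <;> omega
      have he2m2 : eperm m (2 * m + 2) = 2 * m + 1 := by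
        rw [eperm_apply m (2 * m + 2) hm]; split_ifs <;> omega
      have hebig : ∀ x, x = 0 ∨ 2 * m + 2 < x → eperm m x = x := fun x hx => by
        rw [eperm_apply m x hm]; split_ifs <;> omega
      have hdmid : ∀ x, 2 ≤ x → x ≤ 2 * m + 1 → dperm m x = x - 1 := fun x a b => by
        rw [dperm_apply]; split_ifs <;> omega
      have hd1 : dperm m 1 = 2 * m + 1 := by rw [dperm_apply]; split_ifs <;> omega
      have hdbig : ∀ x, x = 0 ∨ 2 * m + 1 < x → dperm m x = x := fun x hx => by
        rw [dperm_apply]; split_ifs <;> omega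
      set g : Equiv.Perm ℕ := dperm m * π * eperm m with hgdef
      have hgapp : ∀ x, g x = dperm m (π (eperm m x)) := fun x => rfl
      have hgIn : InSymm (2 * m) g := by
        intro x hx
        rw [Finset.mem_Icc] at hx
        push_neg at hx
        rw [hgapp]
        by_cases hx0 : x = 0
        · subst hx0
          rw [hebig 0 (Or.inl rfl), hπ0 0 (by simp), hdbig 0 (Or.inl rfl)]
        · by_cases hx1 : x = 2 * m + 1
          · subst hx1
            rw [he2m1, hπ2, hd1]
          · by_cases hx2 : x = 2 * m + 2
            · subst hx2
              rw [he2m2, hπm.2, hdbig (2 * m + 2) (by omega)]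
            · have hxb : 2 * m + 2 < x := by omega
              rw [hebig x (by omega), hπ0 x (by rw [Finset.mem_Icc]; omega),
                hdbig x (by omega)]
      set u : Equiv.Perm ℕ := β⁻¹ * g⁻¹ * α with hudef
      have huIn : InSymm (2 * m) u := (hβ0.inv.mul hgIn.inv).mul hα0
      have hginv : α * u⁻¹ * β⁻¹ = g := by
        rw [hudef]
        group
      obtain ⟨h0, h1, h2, h3, h4, h5⟩ := hH u huIn
      rw [hginv] at h1 h3 h5
      have hπbig : ∀ x, x ∉ Finset.Icc 1 (2 * m + 2) → π x = x := hπ0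
      have hHu : H u = π := by
        apply Equiv.ext
        intro x
        by_cases hx : 1 ≤ x ∧ x ≤ 2 * m + 2
        · by_cases hx1 : x = 1
          · subst hx1
            rw [h1, hgapp, he1]
            have hb := hπ0.bounds (le_refl 1) (by omega)
            have hne : π 1 ≠ 2 * m + 2 := by
              intro hc
              have : (1 : ℕ) = 2 * m + 1 := Equiv.injective π (by rw [hc, hπm.2])
              omega
            rw [hdmid (π 1) (by omega) (by omega)]
            omega
          · by_cases hx2 : x = 2
            · subst hx2; rw [h2, hπ2]
            · by_cases hx3 : x ≤ 2 * m
              · rw [h3 x (by omega) hx3, hgapp, hemid (x - 1) (by omega) (by omega)]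
                have hsx : x - 1 + 1 = x := by omega
                rw [hsx]
                have hb := hπ0.bounds (show 1 ≤ x by omega) (by omega)
                have hne1 : π x ≠ 1 := by
                  intro hc
                  have : x = 2 := Equiv.injective π (by rw [hc, hπ2])
                  omega
                have hne2 : π x ≠ 2 * m + 2 := by
                  intro hc
                  have : x = 2 * m + 1 := Equiv.injective π (by rw [hc, hπm.2])
                  omega
                rw [hdmid (π x) (by omega) (by omega)]
                omega
              · by_cases hx4 : x = 2 * m + 1
                · subst hx4; rw [h4, hπm.2]
                · have hx5 : x = 2 * m + 2 := by omega
                  subst hx5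
                  rw [h5, hgapp, he2m]
                  have hb := hπ0.bounds (show 1 ≤ 2 * m + 2 by omega) (le_refl _)
                  have hne1 : π (2 * m + 2) ≠ 1 := by
                    intro hc
                    have : 2 * m + 2 = 2 := Equiv.injective π (by rw [hc, hπ2])
                    omega
                  rw [hdmid (π (2 * m + 2)) (by omega) (by omega)]
                  omega
        · rw [h0 x (by rw [Finset.mem_Icc]; omega), hπ0 x (by rw [Finset.mem_Icc]; omega)]
      have hgc : GCond m g :=
        (bridge m hm g (H u) hgIn h1 h2 h3 h4 h5).mp (by rw [hHu]; exact hπC)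
      have hdist : permDist (2 * m) 1 u + permDist (2 * m) u w = permDist (2 * m) 1 w := by
        rw [segment_iff m hm w u hw1 hw2]
        rw [segbtw_iff_gcond m hm u α β huIn hα1 hα2 hβ1 hβ4, hginv]
        exact hgc
      exact ⟨u, ⟨huIn, hdist⟩, hHu⟩
  refine ⟨hbij, ?_⟩
  rw [← hbij.image_eq]
  exact (Set.ncard_image_of_injOn hbij.injOn).symm
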